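/- arXiv:2009.00517 — 2 statements merged into one kernel-verified Lean document; each statement's English description precedes it below -/
import Mathlib

section
/- Let γ₁, …, γ_K be independent exponential random variables with distinct means λ₁, …, λ_K > 0. Then E[log₂(1 + Σ_k γ_k)] = −(1/ln 2) Σ_{i=1}^K e^{1/λ_i} Ei(−1/λ_i) Π_{j≠i} λ_i/(λ_i − λ_j). -/
open MeasureTheory ProbabilityTheory Real

open Set Filter

section AuxLemmas

-- Lagrange identity
lemma lagrange_eval {K : ℕ} (hK : 1 ≤ K) (μ : Fin K → ℝ) (hinj : Function.Injective μ) (x : ℝ) :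
    ∑ j, ∏ i ∈ Finset.univ.erase j, (x - μ i) / (μ j - μ i) = 1 := by
  classical
  have hne : (Finset.univ : Finset (Fin K)).Nonempty := by
    refine Finset.univ_nonempty_iff.2 ?_
    exact Fin.pos_iff_nonempty.mp hK
  have h := Lagrange.sum_basis (Set.injOn_of_injective hinj) hne
  have := congrArg (Polynomial.eval x) h
  simp only [Polynomial.eval_finset_sum, Polynomial.eval_one] at this
  rw [← this]
  refine Finset.sum_congr rfl fun j _ => ?_
  rw [Lagrange.basis, Polynomial.eval_prod]
  refine Finset.prod_congr rfl fun i hi => ?_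
  rw [Lagrange.basisDivisor]
  simp [div_eq_inv_mul]

lemma sum_c_eq_one {K : ℕ} (hK : 1 ≤ K) (μ : Fin K → ℝ) (hinj : Function.Injective μ) :
    ∑ j, ∏ i ∈ Finset.univ.erase j, μ i / (μ i - μ j) = 1 := by
  have h := lagrange_eval hK μ hinj 0
  rw [← h]
  refine Finset.sum_congr rfl fun j _ => Finset.prod_congr rfl fun i hi => ?_
  rw [zero_sub, show μ j - μ i = -(μ i - μ j) from by ring, neg_div_neg_eq]

lemma partial_fraction {K : ℕ} (hK : 1 ≤ K) (μ : Fin K → ℝ) (hμ : ∀ k, 0 < μ k)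
    (hinj : Function.Injective μ) {t : ℝ} (ht : 0 < t) :
    ∑ j, (∏ i ∈ Finset.univ.erase j, μ i / (μ i - μ j)) * (t / (t + μ j))
      = 1 - ∏ k, μ k / (t + μ k) := by
  classical
  have htμ : ∀ k, t + μ k ≠ 0 := fun k => by have := hμ k; nlinarith
  have hμ0 : ∀ k, μ k ≠ 0 := fun k => (hμ k).ne'
  have h1 := lagrange_eval hK μ hinj (-t)
  have h2 : ∑ j, (∏ i ∈ Finset.univ.erase j, μ i / (μ i - μ j)) *
      ∏ i ∈ Finset.univ.erase j, (t + μ i) / μ i = 1 := by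
    rw [← h1]
    refine Finset.sum_congr rfl fun j _ => ?_
    rw [← Finset.prod_mul_distrib]
    refine Finset.prod_congr rfl fun i hi => ?_
    have hij : μ i ≠ μ j := fun h => (Finset.mem_erase.1 hi).1 (hinj h)
    rw [div_mul_div_comm, mul_comm (μ i), mul_div_mul_right _ _ (hμ0 i)]
    rw [show (-t - μ i) = -(t + μ i) by ring, show (μ j - μ i) = -(μ i - μ j) by ring,
      neg_div_neg_eq]
  have h3 : ∑ j, (∏ i ∈ Finset.univ.erase j, μ i / (μ i - μ j)) * (μ j / (t + μ j))
      = ∏ k, μ k / (t + μ k) := by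
    have := congrArg (· * ∏ k, μ k / (t + μ k)) h2
    simp only [Finset.sum_mul, one_mul] at this
    rw [← this]
    refine Finset.sum_congr rfl fun j _ => ?_
    rw [mul_assoc]
    congr 1
    rw [← Finset.mul_prod_erase _ _ (Finset.mem_univ j), ← mul_assoc, mul_comm _ (μ j / (t + μ j)),
      mul_assoc, ← Finset.prod_mul_distrib]
    have : ∏ i ∈ Finset.univ.erase j, (t + μ i) / μ i * (μ i / (t + μ i)) = 1 := by
      refine Finset.prod_eq_one fun i _ => ?_
      rw [div_mul_div_comm, div_eq_one_iff_eq (by exact mul_ne_zero (hμ0 i) (htμ i))]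
      ring
    rw [this, mul_one]
  have h4 := sum_c_eq_one hK μ hinj
  have key : ∀ j, t / (t + μ j) = 1 - μ j / (t + μ j) := fun j => by
    have h := htμ j
    field_simp
    ring
  calc ∑ j, (∏ i ∈ Finset.univ.erase j, μ i / (μ i - μ j)) * (t / (t + μ j))
      = ∑ j, ((∏ i ∈ Finset.univ.erase j, μ i / (μ i - μ j))
          - (∏ i ∈ Finset.univ.erase j, μ i / (μ i - μ j)) * (μ j / (t + μ j))) := by
        refine Finset.sum_congr rfl fun j _ => ?_
        rw [key j, mul_sub, mul_one]
    _ = 1 - ∏ k, μ k / (t + μ k) := by rw [Finset.sum_sub_distrib, h4, h3]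


lemma integral_exp_neg_mul_Ioi {a : ℝ} (ha : 0 < a) :
    ∫ t in Ioi (0:ℝ), exp (-(a * t)) = a⁻¹ := by
  have := integral_comp_mul_left_Ioi (fun x => exp (-x)) 0 ha
  simp only [mul_zero, integral_exp_neg_Ioi, neg_zero, exp_zero, smul_eq_mul, mul_one] at this
  simpa [abs_of_pos (inv_pos.2 ha)] using this

lemma intervalIntegral_exp_neg_mul {t : ℝ} (ht : t ≠ 0) (a b : ℝ) :
    ∫ u in a..b, exp (-(t * u)) = (exp (-(t * a)) - exp (-(t * b))) / t := by
  have D : ∀ x : ℝ, HasDerivAt (fun u : ℝ => -exp (-(t * u)) / t) (exp (-(t * x))) x := by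
    intro x
    have h1 : HasDerivAt (fun u : ℝ => -(t * u)) (-t) x := by
      simpa using ((hasDerivAt_id x).const_mul t).fun_neg
    have := (h1.exp.neg).div_const t
    simpa [mul_comm, mul_div_assoc, neg_div, ht] using this
  rw [intervalIntegral.integral_eq_sub_of_hasDerivAt (fun x _ => D x)
    ((Continuous.intervalIntegrable (by continuity) a b))]
  ring

lemma frullani_lintegral {s : ℝ} (hs : 0 ≤ s) :
    ∫⁻ t in Ioi (0:ℝ), ENNReal.ofReal (exp (-t) * (1 - exp (-(t * s))) / t)
      = ENNReal.ofReal (Real.log (1 + s)) := by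
  have h1s : (1:ℝ) ≤ 1 + s := by linarith
  -- step 1: rewrite integrand as inner lintegral
  have step1 : ∀ t ∈ Ioi (0:ℝ),
      ENNReal.ofReal (exp (-t) * (1 - exp (-(t * s))) / t)
        = ∫⁻ u in Ioc (1:ℝ) (1 + s), ENNReal.ofReal (exp (-(t * u))) := by
    intro t ht
    rw [Set.mem_Ioi] at ht
    have hint : IntegrableOn (fun u => exp (-(t * u))) (Ioc (1:ℝ) (1 + s)) :=
      (Continuous.integrableOn_Ioc (by continuity))
    rw [← ofReal_integral_eq_lintegral_ofReal hint
      (ae_of_all _ fun u => (exp_pos _).le)]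
    congr 1
    rw [← intervalIntegral.integral_of_le h1s, intervalIntegral_exp_neg_mul ht.ne']
    rw [show -(t * (1 + s)) = -t + -(t * s) by ring, Real.exp_add, mul_one]
    ring
  rw [setLIntegral_congr_fun measurableSet_Ioi step1]
  -- step 2: swap
  have hmeas : Measurable (Function.uncurry fun (t u : ℝ) => ENNReal.ofReal (exp (-(t * u)))) := by
    apply Measurable.ennreal_ofReal
    exact ((measurable_fst.mul measurable_snd).neg).exp
  rw [lintegral_lintegral_swap hmeas.aemeasurable]
  -- step 3: inner integral in t
  have step3 : ∀ u ∈ Ioc (1:ℝ) (1 + s),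
      ∫⁻ t in Ioi (0:ℝ), ENNReal.ofReal (exp (-(t * u))) = ENNReal.ofReal u⁻¹ := by
    intro u hu
    have hu0 : 0 < u := lt_of_lt_of_le one_pos hu.1.le
    have hint : IntegrableOn (fun t => exp (-(u * t))) (Ioi (0:ℝ)) := by
      simpa [neg_mul] using exp_neg_integrableOn_Ioi 0 hu0
    calc ∫⁻ t in Ioi (0:ℝ), ENNReal.ofReal (exp (-(t * u)))
        = ∫⁻ t in Ioi (0:ℝ), ENNReal.ofReal (exp (-(u * t))) := by
          simp_rw [mul_comm]
      _ = ENNReal.ofReal (∫ t in Ioi (0:ℝ), exp (-(u * t))) := by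
          rw [← ofReal_integral_eq_lintegral_ofReal hint (ae_of_all _ fun t => (exp_pos _).le)]
      _ = ENNReal.ofReal u⁻¹ := by rw [integral_exp_neg_mul_Ioi hu0]
  rw [setLIntegral_congr_fun measurableSet_Ioc step3]
  -- step 4: integral of 1/u
  have hint : IntegrableOn (fun u : ℝ => u⁻¹) (Ioc (1:ℝ) (1 + s)) := by
    rw [← intervalIntegrable_iff_integrableOn_Ioc_of_le h1s]
    apply intervalIntegral.intervalIntegrable_inv ?_ continuousOn_id
    intro x hx
    rw [uIcc_of_le h1s] at hx
    exact (lt_of_lt_of_le one_pos hx.1).ne'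
  rw [← ofReal_integral_eq_lintegral_ofReal hint
    (ae_restrict_of_forall_mem measurableSet_Ioc fun u hu =>
      inv_nonneg.2 (lt_of_lt_of_le one_pos hu.1.le).le)]
  congr 1
  rw [← intervalIntegral.integral_of_le h1s, integral_inv (by
    rw [uIcc_of_le h1s]; intro h; exact absurd h.1 (by norm_num)), div_one]



end AuxLemmas

/-- The exponential integral `Ei(x) = -∫_{-x}^∞ e^{-t}/t dt` for `x < 0`. -/
noncomputable def Ei (x : ℝ) : ℝ := -∫ t in Set.Ioi (-x), Real.exp (-t) / t

section AuxLemmas2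

lemma integral_exp_div_add {μ : ℝ} (hμ : 0 < μ) :
    ∫ t in Ioi (0:ℝ), exp (-t) / (t + μ) = -(exp μ * Ei (-μ)) := by
  have key : ∫ t in Ioi (0:ℝ), exp (-(t + μ)) / (t + μ) = ∫ u in Ioi μ, exp (-u) / u := by
    have h := (measurePreserving_add_right (volume : Measure ℝ) μ).setIntegral_preimage_emb
      (MeasurableEquiv.addRight μ).measurableEmbedding (fun u => exp (-u) / u) (Ioi μ)
    have hpre : (fun x : ℝ => x + μ) ⁻¹' Ioi μ = Ioi 0 := by
      ext x; simp [Set.mem_Ioi]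
    simpa [hpre] using h
  have : ∀ t : ℝ, exp (-t) / (t + μ) = exp μ * (exp (-(t + μ)) / (t + μ)) := by
    intro t
    rw [show -t = μ + -(t+μ) by ring, Real.exp_add]
    ring
  simp_rw [this]
  rw [integral_const_mul, key, Ei, neg_neg, neg_mul_eq_mul_neg, neg_neg]

lemma exp_mgf_exponential {r t : ℝ} (hr : 0 < r) (ht : 0 < t) :
    ∫ x, exp (-(t * x)) ∂(volume.withDensity (exponentialPDF r)) = r / (t + r) := by
  have hmeasd : Measurable (exponentialPDF r) :=
    (measurable_exponentialPDFReal r).ennreal_ofReal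
  have hmf : Measurable fun x : ℝ => ENNReal.ofReal (exp (-(t * x))) :=
    ((measurable_id.const_mul t).neg.exp).ennreal_ofReal
  rw [integral_eq_lintegral_of_nonneg_ae (ae_of_all _ fun x => (exp_pos _).le)
    (Continuous.aestronglyMeasurable (by continuity))]
  rw [lintegral_withDensity_eq_lintegral_mul _ hmeasd hmf]
  have hsplit : ∫⁻ x, exponentialPDF r x * ENNReal.ofReal (exp (-(t * x)))
      = ∫⁻ x in Ioi 0, ENNReal.ofReal (r * exp (-((t + r) * x))) := by
    rw [← lintegral_add_compl (μ := volume)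
      (f := fun x => exponentialPDF r x * ENNReal.ofReal (exp (-(t * x))))
      (measurableSet_Ioi (a := (0:ℝ)))]
    have h2 : ∫⁻ x in (Ioi (0:ℝ))ᶜ, exponentialPDF r x * ENNReal.ofReal (exp (-(t * x))) = 0 := by
      rw [Set.compl_Ioi, ← setLIntegral_congr (Iio_ae_eq_Iic (a := (0:ℝ)))]
      have hz : ∀ x ∈ Iio (0:ℝ), exponentialPDF r x * ENNReal.ofReal (exp (-(t * x))) = 0 :=
        fun x hx => by rw [exponentialPDF_of_neg hx, zero_mul]
      rw [setLIntegral_congr_fun measurableSet_Iio hz, lintegral_zero]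
    rw [h2, add_zero]
    refine setLIntegral_congr_fun measurableSet_Ioi (fun x hx => ?_)
    rw [exponentialPDF_of_nonneg (le_of_lt hx), ← ENNReal.ofReal_mul (by positivity)]
    congr 1
    rw [mul_assoc, ← Real.exp_add]
    ring_nf
  simp only [Pi.mul_apply]
  rw [hsplit]
  have hint : IntegrableOn (fun x => r * exp (-((t + r) * x))) (Ioi (0:ℝ)) := by
    apply Integrable.const_mul
    have h := exp_neg_integrableOn_Ioi 0 (by positivity : (0:ℝ) < t + r)
    simp only [neg_mul] at h
    exact h
  rw [← ofReal_integral_eq_lintegral_ofReal hint (ae_of_all _ fun x => by positivity)]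
  rw [integral_const_mul, integral_exp_neg_mul_Ioi (by positivity : (0:ℝ) < t + r)]
  rw [ENNReal.toReal_ofReal (by positivity), div_eq_mul_inv]


end AuxLemmas2

/-- For independent exponentials `γ₁, …, γ_K` with pairwise distinct means `λ_k > 0`,
`E[log₂(1 + Σ_k γ_k)] = -(1/ln 2) Σ_i e^{1/λ_i} Ei(-1/λ_i) Π_{j≠i} λ_i/(λ_i - λ_j)`. -/
theorem expectation_log_one_add_hypoexponential {Ω : Type*} [MeasurableSpace Ω] (P : Measure Ω)
    [IsProbabilityMeasure P] (K : ℕ) (hK : 1 ≤ K) (γ : Fin K → Ω → ℝ)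
    (hmeas : ∀ k, Measurable (γ k)) (lam : Fin K → ℝ) (hlam : ∀ k, 0 < lam k)
    (hdist : ∀ i j, i ≠ j → lam i ≠ lam j)
    (hindep : iIndepFun γ P)
    (hexp : ∀ k, P.map (γ k) = volume.withDensity (exponentialPDF (lam k)⁻¹)) :
    ∫ ω, Real.logb 2 (1 + ∑ k, γ k ω) ∂P
      = -(1 / Real.log 2) * ∑ i, Real.exp (1 / lam i) * Ei (-(1 / lam i)) *
          ∏ j ∈ Finset.univ.erase i, lam i / (lam i - lam j) := by
  classical
  set μ : Fin K → ℝ := fun k => (lam k)⁻¹ with hμdef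
  have hμpos : ∀ k, 0 < μ k := fun k => inv_pos.2 (hlam k)
  have hμinj : Function.Injective μ := by
    intro i j h
    by_contra hij
    exact hdist i j hij (by
      have := congrArg (fun x => x⁻¹) h
      simpa [hμdef] using this)
  set c : Fin K → ℝ := fun j => ∏ i ∈ Finset.univ.erase j, μ i / (μ i - μ j) with hcdef
  set S : Ω → ℝ := fun ω => ∑ k, γ k ω with hSdef
  have hSmeas : Measurable S := by
    apply Finset.measurable_sum
    exact fun k _ => hmeas k
  -- a.e. nonnegativity
  have hγ0 : ∀ k, ∀ᵐ ω ∂P, 0 ≤ γ k ω := by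
    intro k
    rw [ae_iff]
    have : {ω | ¬0 ≤ γ k ω} = γ k ⁻¹' (Iio 0) := by
      ext ω; simp [Set.mem_Iio, not_le]
    rw [this, ← Measure.map_apply (hmeas k) measurableSet_Iio, hexp k,
      withDensity_apply _ measurableSet_Iio]
    exact lintegral_exponentialPDF_of_nonpos le_rfl
  have hS0 : ∀ᵐ ω ∂P, 0 ≤ S ω := by
    have := ae_all_iff.2 hγ0
    filter_upwards [this] with ω hω
    exact Finset.sum_nonneg fun k _ => hω k
  -- MGF of the sum
  have hmgf : ∀ t : ℝ, 0 < t → ∫ ω, exp (-(t * S ω)) ∂P = ∏ k, μ k / (t + μ k) := by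
    intro t ht
    have h1 : ∫ ω, exp (-(t * S ω)) ∂P = mgf (∑ k, γ k) P (-t) := by
      unfold mgf
      congr 1 with ω
      simp [hSdef, Finset.sum_apply, neg_mul]
    rw [h1, hindep.mgf_sum hmeas Finset.univ]
    refine Finset.prod_congr rfl fun k _ => ?_
    unfold mgf
    have h2 := integral_map (μ := P) (hmeas k).aemeasurable
      (f := fun x => exp (-(t * x))) (Continuous.aestronglyMeasurable (by continuity))
    rw [hexp k] at h2
    simp only [neg_mul]
    rw [← h2]
    exact exp_mgf_exponential (hμpos k) ht
  -- the real function on (0,∞)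
  set g : ℝ → ℝ := fun t => exp (-t) * (1 - ∏ k, μ k / (t + μ k)) / t with hgdef
  -- each summand integrable
  have hjint : ∀ j : Fin K, IntegrableOn (fun t => exp (-t) / (t + μ j)) (Ioi (0:ℝ)) := by
    intro j
    have hb : IntegrableOn (fun t : ℝ => exp (-t) * (μ j)⁻¹) (Ioi (0:ℝ)) := by
      apply Integrable.mul_const
      have h := exp_neg_integrableOn_Ioi 0 (one_pos (α := ℝ))
      simpa [IntegrableOn] using h
    refine Integrable.mono' hb (Measurable.aestronglyMeasurable (by fun_prop)) ?_
    refine ae_restrict_of_forall_mem measurableSet_Ioi fun t ht => ?_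
    rw [Set.mem_Ioi] at ht
    rw [Real.norm_eq_abs, abs_of_nonneg (div_nonneg (exp_pos _).le (by linarith [hμpos j]))]
    rw [div_eq_mul_inv]
    have h1 : (t + μ j)⁻¹ ≤ (μ j)⁻¹ := by
      apply inv_anti₀ (hμpos j)
      linarith
    exact mul_le_mul_of_nonneg_left h1 (exp_pos _).le
  have hgsum : ∀ t ∈ Ioi (0:ℝ), g t = ∑ j, c j * (exp (-t) / (t + μ j)) := by
    intro t ht
    rw [Set.mem_Ioi] at ht
    rw [hgdef]
    simp only
    rw [← partial_fraction hK μ hμpos hμinj ht, Finset.mul_sum, Finset.sum_div]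
    refine Finset.sum_congr rfl fun j _ => ?_
    rw [mul_comm (exp (-t)), mul_div_assoc, mul_assoc]
    congr 1
    rw [div_mul_div_comm, mul_comm t (exp (-t)), mul_div_mul_right _ _ ht.ne']
  have hgint : IntegrableOn g (Ioi (0:ℝ)) := by
    rw [integrableOn_congr_fun hgsum measurableSet_Ioi]
    exact integrable_finset_sum _ fun j _ => (hjint j).const_mul _
  have hgnn : ∀ t ∈ Ioi (0:ℝ), 0 ≤ g t := by
    intro t ht
    rw [Set.mem_Ioi] at ht
    have h1 : ∏ k, μ k / (t + μ k) ≤ 1 :=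
      Finset.prod_le_one (fun k _ => div_nonneg (hμpos k).le (by linarith [hμpos k]))
        (fun k _ => by
          rw [div_le_one (by linarith [hμpos k])]
          linarith [(hμpos k)])
    have := exp_pos (-t)
    apply div_nonneg _ ht.le
    nlinarith
  -- value of the integral of g
  have hgval : ∫ t in Ioi (0:ℝ), g t = ∑ j, c j * (-(exp (μ j) * Ei (-(μ j)))) := by
    rw [setIntegral_congr_fun measurableSet_Ioi hgsum,
      integral_finset_sum _ fun j _ => (hjint j).const_mul _]
    exact Finset.sum_congr rfl fun j _ => by
      rw [integral_const_mul, integral_exp_div_add (hμpos j)]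
  -- main lintegral computation
  have hexpble : ∀ t : ℝ, 0 < t → Integrable (fun ω => exp (-(t * S ω))) P := by
    intro t ht
    refine Integrable.mono' (integrable_const (1:ℝ))
      (Measurable.aestronglyMeasurable (by fun_prop)) ?_
    filter_upwards [hS0] with ω hω
    rw [Real.norm_eq_abs, abs_of_nonneg (exp_pos _).le]
    exact Real.exp_le_one_iff.2 (by nlinarith)
  have hlint : ∫⁻ ω, ENNReal.ofReal (Real.log (1 + S ω)) ∂P
      = ENNReal.ofReal (∫ t in Ioi (0:ℝ), g t) := by
    have e1 : ∫⁻ ω, ENNReal.ofReal (Real.log (1 + S ω)) ∂P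
        = ∫⁻ ω, (∫⁻ t in Ioi (0:ℝ),
            ENNReal.ofReal (exp (-t) * (1 - exp (-(t * S ω))) / t)) ∂P :=
      lintegral_congr_ae (hS0.mono fun ω hω => (frullani_lintegral hω).symm)
    have hFmeas : Measurable (Function.uncurry fun (ω : Ω) (t : ℝ) =>
        ENNReal.ofReal (exp (-t) * (1 - exp (-(t * S ω))) / t)) := by
      apply Measurable.ennreal_ofReal
      fun_prop
    rw [e1, lintegral_lintegral_swap hFmeas.aemeasurable]
    have e3 : ∀ t ∈ Ioi (0:ℝ),
        ∫⁻ ω, ENNReal.ofReal (exp (-t) * (1 - exp (-(t * S ω))) / t) ∂P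
          = ENNReal.ofReal (g t) := by
      intro t ht
      rw [Set.mem_Ioi] at ht
      have hint : Integrable (fun ω => exp (-t) * (1 - exp (-(t * S ω))) / t) P :=
        (((integrable_const (1:ℝ)).sub (hexpble t ht)).const_mul (exp (-t))).div_const t
      rw [← ofReal_integral_eq_lintegral_ofReal hint ?_]
      · congr 1
        rw [integral_div, integral_const_mul,
          integral_sub (integrable_const 1) (hexpble t ht), hmgf t ht]
        simp [hgdef]
      · filter_upwards [hS0] with ω hω
        have h1 : exp (-(t * S ω)) ≤ 1 := Real.exp_le_one_iff.2 (by nlinarith)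
        have h2 := exp_pos (-t)
        exact div_nonneg (mul_nonneg h2.le (by linarith)) ht.le
    rw [setLIntegral_congr_fun measurableSet_Ioi e3]
    exact ofReal_integral_eq_lintegral_ofReal hgint
      (ae_restrict_of_forall_mem measurableSet_Ioi hgnn) |>.symm
  -- convert to Bochner integral
  have hlog : ∫ ω, Real.log (1 + S ω) ∂P = ∫ t in Ioi (0:ℝ), g t := by
    rw [integral_eq_lintegral_of_nonneg_ae (f := fun ω => Real.log (1 + S ω))
      (hS0.mono fun ω hω => Real.log_nonneg (by linarith))
      (Real.measurable_log.comp (measurable_const.add hSmeas)).aestronglyMeasurable]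
    rw [hlint, ENNReal.toReal_ofReal (setIntegral_nonneg measurableSet_Ioi hgnn)]
  -- finish
  have hfin : ∀ ω, Real.logb 2 (1 + S ω) = Real.log (1 + S ω) / Real.log 2 := fun ω => rfl
  calc ∫ ω, Real.logb 2 (1 + ∑ k, γ k ω) ∂P
      = ∫ ω, Real.log (1 + S ω) / Real.log 2 ∂P := by
        rfl
    _ = (∫ ω, Real.log (1 + S ω) ∂P) / Real.log 2 := integral_div _ _
    _ = (∑ j, c j * (-(exp (μ j) * Ei (-(μ j))))) / Real.log 2 := by rw [hlog, hgval]
    _ = -(1 / Real.log 2) * ∑ i, Real.exp (1 / lam i) * Ei (-(1 / lam i)) *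
          ∏ j ∈ Finset.univ.erase i, lam i / (lam i - lam j) := by
        have hc : ∀ i : Fin K,
            (∏ j ∈ Finset.univ.erase i, lam i / (lam i - lam j)) = c i := by
          intro i
          rw [hcdef]
          simp only [hμdef]
          refine Finset.prod_congr rfl fun j hj => ?_
          have hji : lam j ≠ lam i := hdist j i (Finset.mem_erase.1 hj).1
          have ha := (hlam i).ne'
          have hb := (hlam j).ne'
          have hab : lam i - lam j ≠ 0 := sub_ne_zero.2 hji.symm
          have hba : (lam j)⁻¹ - (lam i)⁻¹ ≠ 0 := by
            rw [sub_ne_zero]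
            intro h
            exact hji (inv_injective h)
          rw [div_eq_div_iff hab hba]
          field_simp
        have h1 : ∀ i : Fin K, exp (1 / lam i) * Ei (-(1 / lam i)) *
            (∏ j ∈ Finset.univ.erase i, lam i / (lam i - lam j))
              = exp (μ i) * Ei (-(μ i)) * c i := by
          intro i
          rw [hc i]
          simp only [one_div, hμdef]
        rw [Finset.sum_congr rfl fun i _ => h1 i]
        have h2 : ∑ j, c j * (-(exp (μ j) * Ei (-(μ j))))
            = -∑ i, exp (μ i) * Ei (-(μ i)) * c i := by
          rw [← Finset.sum_neg_distrib]
          exact Finset.sum_congr rfl fun i _ => by ring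
        rw [h2]
        ring
end

section
/- With R_D(N) = log₂(1 + ρ N A₁ + ρ d + ρ N A₂ + ρ N(N−1) A₃) and R_E(N) = −(1/ln2) e^{1/λ(N)} Ei(−1/λ(N)) where λ(N) = ρ(c + N B), the secrecy rate R_D(N) − R_E(N) − log₂ N converges to log₂(A₃) − log₂ B + κ/ln 2 as N → ∞. -/
open MeasureTheory Real Filter Topology

open Set

theorem intOn_exp_log : IntegrableOn (fun t => Real.exp (-t) * Real.log t) (Set.Ioi 0) := by
  have h1 := Real.GammaIntegral_convergent (by norm_num : (0:ℝ) < 1/2)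
  have h2 := Real.GammaIntegral_convergent (by norm_num : (0:ℝ) < 2)
  refine Integrable.mono' ((h1.const_mul 2).add h2) ?_ ?_
  · exact ((continuousOn_id.neg.rexp.mul (Real.continuousOn_log.mono (fun x hx => ne_of_gt hx)))).aestronglyMeasurable measurableSet_Ioi
  · rw [ae_restrict_iff' measurableSet_Ioi]
    filter_upwards with t ht
    have ht' : 0 < t := ht
    have hb : |Real.log t| ≤ 2 * t ^ ((1:ℝ)/2 - 1) + t ^ ((2:ℝ) - 1) := by
      have hpow : t ^ ((1:ℝ)/2 - 1) = (t ^ ((1:ℝ)/2))⁻¹ := by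
        rw [show (1:ℝ)/2 - 1 = -(1/2) by norm_num, Real.rpow_neg ht'.le]
      rcases le_or_gt t 1 with h | h
      · have hlog : Real.log t ≤ 0 := Real.log_nonpos ht'.le h
        rw [abs_of_nonpos hlog]
        have heq : -Real.log t = 2 * (-Real.log (t ^ ((1:ℝ)/2))) := by
          rw [Real.log_rpow ht']; ring
        rw [heq, hpow]
        have hinv : -Real.log (t ^ ((1:ℝ)/2)) = Real.log ((t ^ ((1:ℝ)/2))⁻¹) := (Real.log_inv _).symm
        rw [hinv]
        have h1' : Real.log ((t ^ ((1:ℝ)/2))⁻¹) ≤ (t ^ ((1:ℝ)/2))⁻¹ := by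
          have := Real.log_le_sub_one_of_pos (x := (t ^ ((1:ℝ)/2))⁻¹) (by positivity)
          linarith
        have hpos : (0:ℝ) ≤ t ^ ((2:ℝ)-1) := by positivity
        exact (mul_le_mul_of_nonneg_left h1' (by norm_num : (0:ℝ) ≤ 2)).trans
          (le_add_of_nonneg_right hpos)
      · rw [abs_of_nonneg (Real.log_nonneg h.le)]
        have h1' : Real.log t ≤ t - 1 := Real.log_le_sub_one_of_pos ht'
        have h2' : t ^ ((2:ℝ) - 1) = t := by norm_num
        have hpos : (0:ℝ) ≤ 2 * t ^ ((1:ℝ)/2 - 1) := by positivity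
        rw [h2']
        linarith
    have he : Real.exp (-t) ≤ 1 := Real.exp_le_one_iff.mpr (by linarith)
    calc ‖Real.exp (-t) * Real.log t‖ = Real.exp (-t) * |Real.log t| := by
          rw [norm_mul, Real.norm_eq_abs, Real.norm_eq_abs, abs_of_pos (Real.exp_pos _)]
      _ ≤ Real.exp (-t) * (2 * t ^ ((1:ℝ)/2 - 1) + t ^ ((2:ℝ) - 1)) :=
          mul_le_mul_of_nonneg_left hb (Real.exp_pos _).le
      _ = 2 * (Real.exp (-t) * t ^ ((1:ℝ)/2 - 1)) + Real.exp (-t) * t ^ ((2:ℝ) - 1) := by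
          ring

theorem integral_exp_log :
    ∫ t in Set.Ioi 0, Real.exp (-t) * Real.log t = -Real.eulerMascheroniConstant := by
  have hd1 := Complex.hasDerivAt_GammaIntegral (s := 1) (by norm_num)
  have hev : Complex.GammaIntegral =ᶠ[𝓝 (1:ℂ)] Complex.Gamma := by
    have hopen : IsOpen {s : ℂ | 0 < s.re} := isOpen_lt continuous_const Complex.continuous_re
    filter_upwards [hopen.mem_nhds (by norm_num : (0:ℝ) < (1:ℂ).re)] with s hs
    exact (Complex.Gamma_eq_integral hs).symm
  have hd2 : HasDerivAt Complex.GammaIntegral (-(Real.eulerMascheroniConstant : ℂ)) 1 :=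
    Complex.hasDerivAt_Gamma_one.congr_of_eventuallyEq hev
  have key := hd1.unique hd2
  have h1 : ∀ t : ℝ, t ∈ Set.Ioi (0:ℝ) →
      (t : ℂ) ^ ((1:ℂ) - 1) * (↑(Real.log t) * ↑(Real.exp (-t)))
        = ((Real.exp (-t) * Real.log t : ℝ) : ℂ) := by
    intro t ht
    rw [sub_self, Complex.cpow_zero, one_mul, ← Complex.ofReal_mul, mul_comm]
  rw [setIntegral_congr_fun measurableSet_Ioi h1] at key
  simp only [show ∀ r : ℝ, (r : ℂ) = RCLike.ofReal r from fun _ => rfl] at key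
  rw [integral_ofReal] at key
  exact_mod_cast key

theorem intOn_exp_div {ε : ℝ} (hε : 0 < ε) :
    IntegrableOn (fun t => Real.exp (-t) / t) (Set.Ioi ε) := by
  refine Integrable.mono' ((exp_neg_integrableOn_Ioi ε one_pos).const_mul ε⁻¹) ?_ ?_
  · refine ((continuousOn_id.neg.rexp).div continuousOn_id ?_).aestronglyMeasurable measurableSet_Ioi
    exact fun x hx => ne_of_gt (hε.trans hx)
  · rw [ae_restrict_iff' measurableSet_Ioi]
    filter_upwards with t ht
    have htp : 0 < t := hε.trans ht
    rw [Real.norm_eq_abs, abs_div, abs_of_pos (Real.exp_pos _), abs_of_pos htp]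
    calc Real.exp (-t) / t ≤ Real.exp (-t) * ε⁻¹ := by
          rw [div_eq_mul_inv]
          exact mul_le_mul_of_nonneg_left (inv_anti₀ hε ht.le) (Real.exp_pos _).le
      _ = ε⁻¹ * Real.exp (-1 * t) := by rw [neg_one_mul]; ring

theorem parts {ε : ℝ} (hε : 0 < ε) :
    ∫ t in Set.Ioi ε, Real.exp (-t) / t
      = -(Real.exp (-ε) * Real.log ε) + ∫ t in Set.Ioi ε, Real.exp (-t) * Real.log t := by
  have hlog : IntegrableOn (fun t => Real.exp (-t) * Real.log t) (Set.Ioi ε) :=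
    intOn_exp_log.mono_set (Set.Ioi_subset_Ioi hε.le)
  have hdiv := intOn_exp_div hε
  have hderiv : ∀ x ∈ Set.Ioi ε, HasDerivAt (fun t => Real.exp (-t) * Real.log t)
      (Real.exp (-x) / x - Real.exp (-x) * Real.log x) x := by
    intro x hx
    have hxp : 0 < x := hε.trans hx
    have h1 : HasDerivAt (fun t : ℝ => Real.exp (-t)) (-Real.exp (-x)) x := by
      simpa using (hasDerivAt_neg x).exp
    have h2 : HasDerivAt (fun t => Real.exp (-t) * Real.log t) _ x := (h1.mul (Real.hasDerivAt_log hxp.ne'))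
    convert h2 using 1
    ring
  have hcont : ContinuousWithinAt (fun t => Real.exp (-t) * Real.log t) (Set.Ici ε) ε := by
    apply ContinuousAt.continuousWithinAt
    exact ((Real.continuous_exp.comp continuous_neg).continuousAt).mul
      (Real.continuousAt_log hε.ne')
  have htend : Tendsto (fun t => Real.exp (-t) * Real.log t) atTop (𝓝 0) := by
    apply squeeze_zero_norm' _ (tendsto_pow_mul_exp_neg_atTop_nhds_zero 1)
    filter_upwards [eventually_ge_atTop (1:ℝ)] with t ht
    rw [Real.norm_eq_abs, abs_mul, abs_of_pos (Real.exp_pos _), pow_one,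
      abs_of_nonneg (Real.log_nonneg ht), mul_comm (t)]
    exact mul_le_mul_of_nonneg_left
      ((Real.log_le_sub_one_of_pos (by linarith)).trans (by linarith)) (Real.exp_pos _).le
  have hint : IntegrableOn (fun x => Real.exp (-x) / x - Real.exp (-x) * Real.log x)
      (Set.Ioi ε) := hdiv.sub hlog
  have := integral_Ioi_of_hasDerivAt_of_tendsto hcont hderiv hint htend
  rw [MeasureTheory.integral_sub hdiv hlog] at this
  linarith [this]

theorem tail_tendsto :
    Tendsto (fun ε => ∫ t in Set.Ioi ε, Real.exp (-t) * Real.log t) (𝓝[>] (0:ℝ))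
      (𝓝 (-Real.eulerMascheroniConstant)) := by
  have hsplit : ∀ ε : ℝ, 0 < ε →
      ∫ t in Set.Ioi ε, Real.exp (-t) * Real.log t
        = (∫ t in Set.Ioi 0, Real.exp (-t) * Real.log t)
          - ∫ t in Set.Ioc 0 ε, Real.exp (-t) * Real.log t := by
    intro ε hε
    have hu : Set.Ioc 0 ε ∪ Set.Ioi ε = Set.Ioi (0:ℝ) := Set.Ioc_union_Ioi_eq_Ioi hε.le
    have hd : Disjoint (Set.Ioc 0 ε) (Set.Ioi ε) := Set.Ioc_disjoint_Ioi le_rfl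
    rw [← hu, MeasureTheory.setIntegral_union hd measurableSet_Ioi
      (intOn_exp_log.mono_set (by rw [← hu]; exact Set.subset_union_left))
      (intOn_exp_log.mono_set (by rw [← hu]; exact Set.subset_union_right))]
    ring
  have hzero : Tendsto (fun ε => ∫ t in Set.Ioc 0 ε, Real.exp (-t) * Real.log t)
      (𝓝[>] (0:ℝ)) (𝓝 0) := by
    have hμ : Tendsto (fun ε : ℝ => (volume.restrict (Set.Ioi (0:ℝ))) (Set.Ioc 0 ε))
        (𝓝[>] (0:ℝ)) (𝓝 0) := by
      have h0 : Tendsto (fun ε : ℝ => ENNReal.ofReal ε) (𝓝[>] 0) (𝓝 0) := by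
        rw [← ENNReal.ofReal_zero]
        exact (ENNReal.continuous_ofReal.tendsto 0).comp nhdsWithin_le_nhds
      refine h0.congr fun ε => ?_
      rw [Measure.restrict_apply measurableSet_Ioc,
        Set.inter_eq_self_of_subset_left Set.Ioc_subset_Ioi_self, Real.volume_Ioc, sub_zero]
    have h := intOn_exp_log.tendsto_setIntegral_nhds_zero hμ
    refine h.congr fun ε => ?_
    rw [Measure.restrict_restrict measurableSet_Ioc,
      Set.inter_eq_self_of_subset_left Set.Ioc_subset_Ioi_self]
  have hfinal := (tendsto_const_nhds (x := ∫ t in Set.Ioi 0, Real.exp (-t) * Real.log t)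
      (f := 𝓝[>] (0:ℝ))).sub hzero
  rw [sub_zero] at hfinal
  rw [← integral_exp_log]
  refine hfinal.congr' ?_
  filter_upwards [self_mem_nhdsWithin] with ε hε
  exact (hsplit ε hε).symm

theorem log_mul_id_tendsto : Tendsto (fun ε : ℝ => |Real.log ε * ε|) (𝓝[>] (0:ℝ)) (𝓝 0) := by
  have h := (tendsto_log_mul_rpow_nhdsGT_zero one_pos).abs
  rw [abs_zero] at h
  refine h.congr fun ε => ?_
  rw [Real.rpow_one]

theorem keyF : Tendsto (fun ε => (∫ t in Set.Ioi ε, Real.exp (-t) / t) + Real.log ε)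
    (𝓝[>] (0:ℝ)) (𝓝 (-Real.eulerMascheroniConstant)) := by
  have hz : Tendsto (fun ε : ℝ => Real.log ε * (1 - Real.exp (-ε))) (𝓝[>] (0:ℝ)) (𝓝 0) := by
    apply squeeze_zero_norm' _ log_mul_id_tendsto
    filter_upwards [self_mem_nhdsWithin] with ε (hε : 0 < ε)
    have h1 : Real.exp (-ε) ≤ 1 := Real.exp_le_one_iff.mpr (by linarith)
    have h2 : 1 - ε ≤ Real.exp (-ε) := by
      have := Real.add_one_le_exp (-ε); linarith
    rw [Real.norm_eq_abs, abs_mul, abs_mul, abs_of_nonneg (by linarith : (0:ℝ) ≤ 1 - Real.exp (-ε)),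
      abs_of_pos hε]
    exact mul_le_mul_of_nonneg_left (by linarith) (abs_nonneg _)
  have := hz.add tail_tendsto
  rw [zero_add] at this
  refine this.congr' ?_
  filter_upwards [self_mem_nhdsWithin] with ε (hε : 0 < ε)
  rw [parts hε]; ring

theorem keyE : Tendsto (fun ε => Real.exp ε * (∫ t in Set.Ioi ε, Real.exp (-t) / t) + Real.log ε)
    (𝓝[>] (0:ℝ)) (𝓝 (-Real.eulerMascheroniConstant)) := by
  have hexp : Tendsto (fun ε : ℝ => Real.exp ε - 1) (𝓝[>] (0:ℝ)) (𝓝 0) := by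
    have : Tendsto (fun ε : ℝ => Real.exp ε - 1) (𝓝 (0:ℝ)) (𝓝 0) := by
      have := (Real.continuous_exp.tendsto 0).sub (tendsto_const_nhds (x := (1:ℝ)))
      simpa using this
    exact this.mono_left nhdsWithin_le_nhds
  have hz1 : Tendsto (fun ε : ℝ => (Real.exp ε - 1) *
      ((∫ t in Set.Ioi ε, Real.exp (-t) / t) + Real.log ε)) (𝓝[>] (0:ℝ)) (𝓝 0) := by
    have := hexp.mul keyF
    rwa [zero_mul] at this
  have hz2 : Tendsto (fun ε : ℝ => (Real.exp ε - 1) * (-Real.log ε)) (𝓝[>] (0:ℝ)) (𝓝 0) := by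
    have hg : Tendsto (fun ε : ℝ => Real.exp 1 * |Real.log ε * ε|) (𝓝[>] (0:ℝ)) (𝓝 0) := by
      have := log_mul_id_tendsto.const_mul (Real.exp 1)
      rwa [mul_zero] at this
    apply squeeze_zero_norm' _ hg
    filter_upwards [Ioo_mem_nhdsGT (by norm_num : (0:ℝ) < 1)] with ε hε
    obtain ⟨hε0, hε1⟩ := hε
    have he1 : Real.exp ε - 1 ≤ ε * Real.exp 1 := by
      have h2 : 1 - ε ≤ Real.exp (-ε) := by have := Real.add_one_le_exp (-ε); linarith
      have h3 : Real.exp ε * (1 - ε) ≤ Real.exp ε * Real.exp (-ε) :=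
        mul_le_mul_of_nonneg_left h2 (Real.exp_pos _).le
      rw [← Real.exp_add] at h3
      simp only [add_neg_cancel, Real.exp_zero] at h3
      have h4 : Real.exp ε ≤ Real.exp 1 := Real.exp_le_exp.mpr hε1.le
      nlinarith [Real.exp_pos ε]
    have he0 : 0 ≤ Real.exp ε - 1 := by
      have := Real.add_one_le_exp ε; linarith
    rw [Real.norm_eq_abs, abs_mul, abs_of_nonneg he0, abs_neg, abs_mul, abs_of_pos hε0]
    calc (Real.exp ε - 1) * |Real.log ε| ≤ ε * Real.exp 1 * |Real.log ε| :=
          mul_le_mul_of_nonneg_right he1 (abs_nonneg _)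
      _ = Real.exp 1 * (|Real.log ε| * ε) := by ring
  have := keyF.add (hz2.add hz1)
  rw [add_zero, add_zero] at this
  refine this.congr fun ε => ?_
  ring

/-- With `R_D(N) = log₂(1 + ρNA₁ + ρd + ρNA₂ + ρN(N-1)A₃)` and
`R_E(N) = -(1/ln2) e^{1/λ(N)} Ei(-1/λ(N))` with `λ(N) = ρ(c + NB)`,
`R_D(N) - R_E(N) - log₂ N → log₂ A₃ - log₂ B + κ/ln 2` as `N → ∞`. -/
theorem secrecy_rate_scaling (ρ A₁ A₂ A₃ d c B : ℝ) (hρ : 0 < ρ) (hA₁ : 0 ≤ A₁)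
    (hA₂ : 0 ≤ A₂) (hA₃ : 0 < A₃) (hd : 0 ≤ d) (hc : 0 ≤ c) (hB : 0 < B) :
    Tendsto (fun N : ℕ =>
        Real.logb 2 (1 + ρ * N * A₁ + ρ * d + ρ * N * A₂ + ρ * N * (N - 1) * A₃)
          - (-(1 / Real.log 2) *
              (Real.exp (1 / (ρ * (c + N * B))) * Ei (-(1 / (ρ * (c + N * B))))))
          - Real.logb 2 N) atTop
      (𝓝 (Real.logb 2 A₃ - Real.logb 2 B + Real.eulerMascheroniConstant / Real.log 2)) := by
  set γ := Real.eulerMascheroniConstant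
  have hL : Real.log 2 ≠ 0 := ne_of_gt (Real.log_pos one_lt_two)
  -- λ tends to infinity
  have hlam : Tendsto (fun N : ℕ => ρ * (c + N * B)) atTop atTop := by
    apply Tendsto.const_mul_atTop hρ
    apply tendsto_atTop_add_const_left
    exact (tendsto_natCast_atTop_atTop (R := ℝ)).atTop_mul_const hB
  have hlampos : ∀ N : ℕ, 1 ≤ N → 0 < ρ * (c + N * B) := by
    intro N hN
    have : (1:ℝ) ≤ N := by exact_mod_cast hN
    have : 0 < c + N * B := by nlinarith
    positivity
  -- ε tends to 0 from the right
  have hε : Tendsto (fun N : ℕ => 1 / (ρ * (c + N * B))) atTop (𝓝[>] (0:ℝ)) := by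
    rw [tendsto_nhdsWithin_iff]
    constructor
    · exact hlam.inv_tendsto_atTop.congr fun N => by simp only [Pi.inv_apply, one_div]
    · filter_upwards [eventually_ge_atTop 1] with N hN
      exact one_div_pos.mpr (hlampos N hN)
  have hT2 : Tendsto (fun N : ℕ =>
      Real.exp (1 / (ρ * (c + N * B)))
        * (∫ t in Set.Ioi (1 / (ρ * (c + N * B))), Real.exp (-t) / t)
        + Real.log (1 / (ρ * (c + N * B)))) atTop (𝓝 (-γ)) := keyE.comp hε
  -- ratio limit
  have hinv : Tendsto (fun N : ℕ => ((N:ℝ))⁻¹) atTop (𝓝 0) :=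
    tendsto_inv_atTop_zero.comp (tendsto_natCast_atTop_atTop (R := ℝ))
  set g : ℝ → ℝ := fun x => (x*x + ρ*A₁*x + ρ*d*(x*x) + ρ*A₂*x + ρ*(1-x)*A₃) / (ρ*(c*x + B)) with hg
  have hgc : ContinuousAt g 0 := by
    apply ContinuousAt.div
    · fun_prop
    · fun_prop
    · show ρ * (c * 0 + B) ≠ 0
      rw [mul_zero, zero_add]; positivity
  have hg0 : g 0 = A₃ / B := by
    have hden : ρ * (c * 0 + B) ≠ 0 := by rw [mul_zero, zero_add]; positivity
    simp only [hg]
    rw [div_eq_div_iff hden hB.ne']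
    ring
  have hratio : Tendsto (fun N : ℕ =>
      (1 + ρ * N * A₁ + ρ * d + ρ * N * A₂ + ρ * N * (N - 1) * A₃)
        / ((N:ℝ) * (ρ * (c + N * B)))) atTop (𝓝 (A₃ / B)) := by
    rw [← hg0]
    refine (hgc.tendsto.comp hinv).congr' ?_
    filter_upwards [eventually_ge_atTop 1] with N hN
    have hN1 : (1:ℝ) ≤ N := by exact_mod_cast hN
    have hN0 : (0:ℝ) < N := by linarith
    have hden1 : (0:ℝ) < ρ * (c * (N:ℝ)⁻¹ + B) := by
      have : 0 < c * (N:ℝ)⁻¹ + B := by positivity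
      positivity
    have hden2 : (0:ℝ) < (N:ℝ) * (ρ * (c + N * B)) := mul_pos hN0 (hlampos N hN)
    show g ((N:ℝ)⁻¹) = _
    rw [hg]
    rw [div_eq_div_iff hden1.ne' hden2.ne']
    field_simp
  have hT1 : Tendsto (fun N : ℕ =>
      Real.log ((1 + ρ * N * A₁ + ρ * d + ρ * N * A₂ + ρ * N * (N - 1) * A₃)
        / ((N:ℝ) * (ρ * (c + N * B))))) atTop (𝓝 (Real.log (A₃ / B))) :=
    hratio.log (by positivity)
  -- combine
  have hcomb := (hT1.sub hT2).const_mul (1 / Real.log 2)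
  have hval : 1 / Real.log 2 * (Real.log (A₃ / B) - -γ)
      = Real.logb 2 A₃ - Real.logb 2 B + γ / Real.log 2 := by
    rw [Real.log_div hA₃.ne' hB.ne', Real.logb, Real.logb]
    field_simp
    ring
  rw [hval] at hcomb
  refine hcomb.congr' ?_
  filter_upwards [eventually_ge_atTop 1] with N hN
  have hN1 : (1:ℝ) ≤ N := by exact_mod_cast hN
  have hN0 : (0:ℝ) < N := by linarith
  have hlamp := hlampos N hN
  have hP : (0:ℝ) < 1 + ρ * N * A₁ + ρ * d + ρ * N * A₂ + ρ * N * (N - 1) * A₃ := by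
    have h1 : (0:ℝ) ≤ ρ * N * A₁ := by positivity
    have h2 : (0:ℝ) ≤ ρ * N * A₂ := by positivity
    have h3 : (0:ℝ) ≤ ρ * d := by positivity
    have h4 : (0:ℝ) ≤ ρ * N * ((N:ℝ) - 1) * A₃ := by
      have : (0:ℝ) ≤ (N:ℝ) - 1 := by linarith
      positivity
    linarith
  show 1 / Real.log 2 * (_ - _) = _
  rw [Real.log_div hP.ne' (by positivity : ((N:ℝ) * (ρ * (c + N * B))) ≠ 0)]
  rw [Real.log_mul hN0.ne' hlamp.ne', one_div (ρ * (c + N * B)), Real.log_inv]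
  simp only [Ei, neg_neg, Real.logb]
  field_simp
  ring
end
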